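/- Fix U ∈ ℝ. For every ε > 0 there exists R > 0 such that for every k ∈ ℂ with Re k ≥ 1/4, Im k ≤ 0 and |k| ≥ R, with ω_±(k) = (U ± k²·√(1 + 1/k − U²/k³))/(1 + 1/k) defined using the principal branch of the complex square root (the radicand then being off (−∞,0]), one has for every t > 0: |exp(−i ω_+(k) t)| ≤ exp((ε + (1/2)·(Im k)·(4·Re k − 1))·t) and |exp(−i ω_−(k) t)| ≤ exp((ε − (1/2)·(Im k)·(4·Re k − 1))·t). -/

import Mathlib

/-- The radicand `s(k) = 1 + 1/k − U²/k³`. -/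
noncomputable def plateRad (U : ℝ) (k : ℂ) : ℂ := 1 + 1 / k - (U : ℂ) ^ 2 / k ^ 3

/-- The dispersion root `ω₊(k) = (U + k²√(s(k)))/(1+1/k)` (principal branch). -/
noncomputable def plateOmegaPC (U : ℝ) (k : ℂ) : ℂ :=
  ((U : ℂ) + k ^ 2 * plateRad U k ^ ((1 : ℂ) / 2)) / (1 + 1 / k)

/-- The dispersion root `ω₋(k) = (U − k²√(s(k)))/(1+1/k)` (principal branch). -/
noncomputable def plateOmegaMC (U : ℝ) (k : ℂ) : ℂ :=
  ((U : ℂ) - k ^ 2 * plateRad U k ^ ((1 : ℂ) / 2)) / (1 + 1 / k)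

noncomputable def plateSqrt (U : ℝ) (k : ℂ) : ℂ := plateRad U k ^ ((1 : ℂ) / 2)

noncomputable def plateG (U : ℝ) (k : ℂ) : ℂ :=
  -(4 * (plateSqrt U k + 1 + (plateRad U k - 1) / 2))⁻¹

noncomputable def plateH (U : ℝ) (k : ℂ) : ℂ :=
  ((U : ℂ) + 1 / 2 - (U : ℂ) ^ 2 / 2 * k⁻¹ + (k * (plateRad U k - 1)) ^ 2 * plateG U k)
    / (1 + 1 / k)

open Filter Complex

lemma plate_hu : Tendsto (fun k : ℂ => k⁻¹) (comap (‖·‖ : ℂ → ℝ) atTop) (nhds 0) := by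
  rw [tendsto_zero_iff_norm_tendsto_zero]
  simpa [norm_inv, Pi.inv_def] using (tendsto_comap (f := (‖·‖ : ℂ → ℝ))).inv_tendsto_atTop

lemma plate_hs (U : ℝ) : Tendsto (plateRad U) (comap (‖·‖ : ℂ → ℝ) atTop) (nhds 1) := by
  have h : Tendsto (fun k : ℂ => 1 + k⁻¹ - (U:ℂ)^2 * (k⁻¹)^3) (comap (‖·‖ : ℂ → ℝ) atTop)
      (nhds (1 + 0 - (U:ℂ)^2 * 0^3)) :=
    (tendsto_const_nhds.add plate_hu).sub (tendsto_const_nhds.mul (plate_hu.pow 3))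
  have he : (fun k : ℂ => 1 + k⁻¹ - (U:ℂ)^2 * (k⁻¹)^3) = plateRad U := by
    funext k; simp [plateRad, one_div, div_eq_mul_inv, inv_pow]
  rw [he] at h; simpa using h

lemma plate_hr (U : ℝ) : Tendsto (plateSqrt U) (comap (‖·‖ : ℂ → ℝ) atTop) (nhds 1) := by
  have hc : ContinuousAt (fun z : ℂ => z ^ ((1:ℂ)/2)) 1 :=
    continuousAt_cpow_const (by simp [Complex.slitPlane])
  have := hc.tendsto.comp (plate_hs U)
  simp only [Function.comp_def, one_cpow] at this
  exact this

lemma plate_ne0 : ∀ᶠ k : ℂ in comap (‖·‖ : ℂ → ℝ) atTop, k ≠ 0 := by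
  have h := (tendsto_comap (f := (‖·‖ : ℂ → ℝ))).eventually_ge_atTop 1
  exact h.mono fun k hk h0 => by simp [h0] at hk; linarith

lemma plate_hP (U : ℝ) :
    Tendsto (fun k : ℂ => k * (plateRad U k - 1)) (comap (‖·‖ : ℂ → ℝ) atTop) (nhds 1) := by
  have h : Tendsto (fun k : ℂ => 1 - (U:ℂ)^2 * (k⁻¹)^2) (comap (‖·‖ : ℂ → ℝ) atTop)
      (nhds (1 - (U:ℂ)^2 * 0^2)) :=
    tendsto_const_nhds.sub (tendsto_const_nhds.mul (plate_hu.pow 2))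
  have he : ∀ᶠ k : ℂ in comap (‖·‖ : ℂ → ℝ) atTop,
      (fun k : ℂ => 1 - (U:ℂ)^2 * (k⁻¹)^2) k = k * (plateRad U k - 1) := by
    filter_upwards [plate_ne0] with k hk
    field_simp [plateRad]
    rw [plateRad]; field_simp; ring
  have := h.congr' he
  simpa using this

lemma plate_hG (U : ℝ) : Tendsto (plateG U) (comap (‖·‖ : ℂ → ℝ) atTop) (nhds (-(8:ℂ)⁻¹)) := by
  have hd : Tendsto (fun k : ℂ => 4 * (plateSqrt U k + 1 + (plateRad U k - 1) / 2))
      (comap (‖·‖ : ℂ → ℝ) atTop) (nhds (4 * ((1:ℂ) + 1 + (1 - 1) / 2))) :=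
    tendsto_const_nhds.mul (((plate_hr U).add tendsto_const_nhds).add
      (((plate_hs U).sub tendsto_const_nhds).div_const 2))
  have : Tendsto (fun k : ℂ => -(4 * (plateSqrt U k + 1 + (plateRad U k - 1) / 2))⁻¹)
      (comap (‖·‖ : ℂ → ℝ) atTop) (nhds (-(4 * ((1:ℂ) + 1 + (1 - 1) / 2))⁻¹)) :=
    (hd.inv₀ (by norm_num)).neg
  have he : (4 * ((1:ℂ) + 1 + (1 - 1) / 2))⁻¹ = (8:ℂ)⁻¹ := by norm_num
  rw [he] at this
  exact this

lemma plate_hq : Tendsto (fun k : ℂ => 1 + 1 / k) (comap (‖·‖ : ℂ → ℝ) atTop) (nhds 1) := by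
  simpa using tendsto_const_nhds.add (plate_hu.congr (fun k => (one_div k).symm))

lemma plate_hH (U : ℝ) :
    Tendsto (plateH U) (comap (‖·‖ : ℂ → ℝ) atTop) (nhds ((U:ℂ) + 3/8)) := by
  have hnum : Tendsto
      (fun k : ℂ => (U : ℂ) + 1 / 2 - (U : ℂ) ^ 2 / 2 * k⁻¹
        + (k * (plateRad U k - 1)) ^ 2 * plateG U k)
      (comap (‖·‖ : ℂ → ℝ) atTop)
      (nhds ((U : ℂ) + 1 / 2 - (U : ℂ) ^ 2 / 2 * 0 + 1 ^ 2 * (-(8:ℂ)⁻¹))) :=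
    ((tendsto_const_nhds.sub (tendsto_const_nhds.mul plate_hu)).add
      (((plate_hP U).pow 2).mul (plate_hG U)))
  have := hnum.div plate_hq one_ne_zero
  have he : ((U : ℂ) + 1 / 2 - (U : ℂ) ^ 2 / 2 * 0 + 1 ^ 2 * (-(8:ℂ)⁻¹)) / 1
      = (U:ℂ) + 3/8 := by norm_num; ring
  rw [he] at this
  exact this

lemma plate_hK (U : ℝ) :
    Tendsto (fun k : ℂ => 2 * (U:ℂ) / (1 + 1 / k) - plateH U k)
      (comap (‖·‖ : ℂ → ℝ) atTop) (nhds ((U:ℂ) - 3/8)) := by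
  have h1 : Tendsto (fun k : ℂ => 2 * (U:ℂ) / (1 + 1 / k)) (comap (‖·‖ : ℂ → ℝ) atTop)
      (nhds (2 * (U:ℂ) / 1)) := tendsto_const_nhds.div plate_hq one_ne_zero
  have := h1.sub (plate_hH U)
  have he : 2 * (U:ℂ) / 1 - ((U:ℂ) + 3/8) = (U:ℂ) - 3/8 := by ring
  rw [he] at this
  exact this

lemma plate_sqrt_rep (U : ℝ) (k : ℂ) (hs0 : plateRad U k ≠ 0)
    (hd : plateSqrt U k + 1 + (plateRad U k - 1) / 2 ≠ 0) :
    plateSqrt U k = 1 + (plateRad U k - 1) / 2 + (plateRad U k - 1) ^ 2 * plateG U k := by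
  have hr2 : plateSqrt U k ^ 2 = plateRad U k := by
    rw [plateSqrt, sq, ← Complex.cpow_add _ _ hs0]
    norm_num
  set r := plateSqrt U k with hrdef
  set s := plateRad U k with hsdef
  have he : 4 * (r + 1 + (s - 1) / 2) ≠ 0 := mul_ne_zero (by norm_num) hd
  have key : (s - 1) ^ 2 / (4 * (r + 1 + (s - 1) / 2)) = -(r - 1 - (s - 1) / 2) := by
    rw [div_eq_iff he]
    linear_combination (4:ℂ) * hr2
  rw [plateG, ← hrdef, ← hsdef, mul_neg, ← div_eq_mul_inv, key]
  ring

lemma plate_omega_rep (U : ℝ) (k : ℂ) (hk0 : k ≠ 0) (hq0 : 1 + 1 / k ≠ 0)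
    (hs0 : plateRad U k ≠ 0)
    (hd : plateSqrt U k + 1 + (plateRad U k - 1) / 2 ≠ 0) :
    plateOmegaPC U k = (k ^ 2 - k / 2) + plateH U k := by
  rw [plateOmegaPC, show plateRad U k ^ ((1:ℂ)/2) = plateSqrt U k from rfl,
    plate_sqrt_rep U k hs0 hd, plateH]
  set g := plateG U k
  have hbridge : (U:ℂ) + k^2*(1 + (plateRad U k - 1)/2 + (plateRad U k - 1)^2 * g)
      = (k^2 - k/2)*(1+1/k)
        + ((U:ℂ) + 1/2 - (U:ℂ)^2/2*k⁻¹ + (k*(plateRad U k - 1))^2*g) := by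
    rw [plateRad]
    have hw : (1:ℂ)+1/k - (U:ℂ)^2/k^3 - 1 = (k^2 - (U:ℂ)^2)/k^3 := by
      field_simp
      ring
    have h8 : (1:ℂ) = k^8 * k⁻¹^8 := by rw [← mul_pow, mul_inv_cancel₀ hk0, one_pow]
    rw [hw, inv_eq_one_div]
    field_simp
    ring
  conv_lhs => rw [hbridge, add_div, mul_div_assoc, div_self hq0, mul_one]

/-- exponential estimates in the domain `D = {k : Re k ≥ 1/4, Im k ≤ 0}`:
for every `ε > 0` there is `R > 0` such that for `|k| ≥ R` in `D` the radicand avoids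
`(−∞,0]` and for every `t > 0`,
`|e^{−iω₊(k)t}| ≤ e^{(ε + ½(Im k)(4 Re k − 1))t}` and
`|e^{−iω₋(k)t}| ≤ e^{(ε − ½(Im k)(4 Re k − 1))t}`. -/
theorem exponential_estimates_complex (U : ℝ) :
    ∀ ε : ℝ, 0 < ε → ∃ R : ℝ, 0 < R ∧ ∀ k : ℂ,
      1 / 4 ≤ k.re → k.im ≤ 0 → R ≤ ‖k‖ →
      (¬ ((plateRad U k).im = 0 ∧ (plateRad U k).re ≤ 0))
      ∧ ∀ t : ℝ, 0 < t →
        ‖Complex.exp (-Complex.I * plateOmegaPC U k * (t : ℂ))‖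
          ≤ Real.exp ((ε + 1 / 2 * k.im * (4 * k.re - 1)) * t)
        ∧ ‖Complex.exp (-Complex.I * plateOmegaMC U k * (t : ℂ))‖
          ≤ Real.exp ((ε - 1 / 2 * k.im * (4 * k.re - 1)) * t) := by
  intro ε hε
  -- eventually facts along |k| → ∞
  have e1 : ∀ᶠ k : ℂ in comap (‖·‖ : ℂ → ℝ) atTop, 2 ≤ ‖k‖ :=
    (tendsto_comap (f := (‖·‖ : ℂ → ℝ))).eventually_ge_atTop 2
  have e2 : ∀ᶠ k : ℂ in comap (‖·‖ : ℂ → ℝ) atTop,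
      ‖plateRad U k - 1‖ < 1/2 := by
    have := Metric.tendsto_nhds.mp (plate_hs U) (1/2) (by norm_num)
    simpa [Complex.dist_eq] using this
  have e3 : ∀ᶠ k : ℂ in comap (‖·‖ : ℂ → ℝ) atTop,
      ‖plateSqrt U k - 1‖ < 1/2 := by
    have := Metric.tendsto_nhds.mp (plate_hr U) (1/2) (by norm_num)
    simpa [Complex.dist_eq] using this
  have e4 : ∀ᶠ k : ℂ in comap (‖·‖ : ℂ → ℝ) atTop, |(plateH U k).im| ≤ ε := by
    have him : Tendsto (fun k : ℂ => (plateH U k).im) (comap (‖·‖ : ℂ → ℝ) atTop)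
        (nhds (((U:ℂ) + 3/8).im)) := (Complex.continuous_im.tendsto _).comp (plate_hH U)
    have h0 : ((U:ℂ) + 3/8).im = 0 := by simp
    rw [h0] at him
    have := Metric.tendsto_nhds.mp him ε hε
    filter_upwards [this] with k hk
    rw [Real.dist_eq, sub_zero] at hk
    exact hk.le
  have e5 : ∀ᶠ k : ℂ in comap (‖·‖ : ℂ → ℝ) atTop,
      |(2 * (U:ℂ) / (1 + 1 / k) - plateH U k).im| ≤ ε := by
    have him : Tendsto (fun k : ℂ => (2 * (U:ℂ) / (1 + 1 / k) - plateH U k).im)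
        (comap (‖·‖ : ℂ → ℝ) atTop) (nhds (((U:ℂ) - 3/8).im)) :=
      (Complex.continuous_im.tendsto _).comp (plate_hK U)
    have h0 : ((U:ℂ) - 3/8).im = 0 := by simp
    rw [h0] at him
    have := Metric.tendsto_nhds.mp him ε hε
    filter_upwards [this] with k hk
    rw [Real.dist_eq, sub_zero] at hk
    exact hk.le
  have Ev := e1.and (e2.and (e3.and (e4.and e5)))
  rw [Filter.eventually_comap] at Ev
  rw [Filter.eventually_atTop] at Ev
  obtain ⟨R0, hR0⟩ := Ev
  refine ⟨max R0 1, lt_max_of_lt_right one_pos, ?_⟩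
  intro k _ _ hRk
  obtain ⟨h2k, hs1, hr1, hHb, hKb⟩ :=
    hR0 ‖k‖ (le_trans (le_max_left _ _) hRk) k rfl
  -- basic nonvanishing facts
  have hk0 : k ≠ 0 := by
    intro h; rw [h] at h2k; simp at h2k; linarith
  have hs0 : plateRad U k ≠ 0 := by
    intro h; rw [h] at hs1; simp at hs1; linarith
  have hq0 : (1 : ℂ) + 1 / k ≠ 0 := by
    intro h
    have h1 : (1:ℂ)/k = -1 := by linear_combination h
    have h2 := congrArg (‖·‖ : ℂ → ℝ) h1
    rw [norm_div, norm_one] at h2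
    simp at h2
    rw [h2] at h2k
    linarith
  have hd : plateSqrt U k + 1 + (plateRad U k - 1) / 2 ≠ 0 := by
    intro h
    have h2 : (2:ℂ) = -(plateSqrt U k - 1) - (plateRad U k - 1)/2 := by linear_combination h
    have h3 := congrArg (‖·‖ : ℂ → ℝ) h2
    have hb := norm_sub_le (-(plateSqrt U k - 1)) ((plateRad U k - 1)/2)
    rw [norm_neg] at hb
    rw [← h3] at hb
    simp [map_div₀] at hb
    linarith
  -- slit plane condition
  have hslit : ¬ ((plateRad U k).im = 0 ∧ (plateRad U k).re ≤ 0) := by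
    rintro ⟨-, hre0⟩
    have h1 : |(plateRad U k - 1).re| ≤ ‖plateRad U k - 1‖ :=
      Complex.abs_re_le_norm _
    rw [Complex.sub_re, Complex.one_re] at h1
    have h2 : 1 - (plateRad U k).re ≤ |(plateRad U k).re - 1| := by
      rw [abs_sub_comm]; exact le_abs_self _
    linarith
  refine ⟨hslit, ?_⟩
  intro t ht
  have homega := plate_omega_rep U k hk0 hq0 hs0 hd
  have himP : (plateOmegaPC U k).im = 2*k.re*k.im - k.im/2 + (plateH U k).im := by
    rw [homega]
    simp [Complex.add_im, Complex.sub_im, sq, Complex.mul_im, Complex.div_im,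
      Complex.ofReal_re, Complex.ofReal_im]
    ring
  have hsum : plateOmegaMC U k = 2*(U:ℂ)/(1 + 1/k) - plateOmegaPC U k := by
    rw [eq_sub_iff_add_eq, plateOmegaMC, plateOmegaPC, ← add_div]
    congr 1
    ring
  have himM : (plateOmegaMC U k).im
      = (2*(U:ℂ)/(1 + 1/k) - plateH U k).im - (2*k.re*k.im - k.im/2) := by
    rw [hsum, Complex.sub_im, Complex.sub_im, himP]
    ring
  have habs : ∀ ω : ℂ, ‖Complex.exp (-Complex.I * ω * (t:ℂ))‖
      = Real.exp (ω.im * t) := by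
    intro ω
    rw [Complex.norm_exp]
    congr 1
    simp [Complex.mul_re, Complex.mul_im, Complex.ofReal_re, Complex.ofReal_im]
  constructor
  · rw [habs]
    apply Real.exp_le_exp.mpr
    apply mul_le_mul_of_nonneg_right _ ht.le
    have := abs_le.mp hHb
    rw [himP]
    nlinarith [this.1, this.2]
  · rw [habs]
    apply Real.exp_le_exp.mpr
    apply mul_le_mul_of_nonneg_right _ ht.le
    have := abs_le.mp hKb
    rw [himM]
    nlinarith [this.1, this.2]
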